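/- Let z : Finset ℂ, let k : ℂ → ℂ, and let f : ℂ → ℂ be continuously differentiable over ℝ (ContDiff ℝ 1 f) with compact support. Then ∫ w, (∑_{x ∈ z} k x / (w - x)) * (∂̄f)(w) ∂volume = -π * ∑_{x ∈ z} k x * f x, where ∂̄f(w) := (fderiv ℝ f w 1 + Complex.I * fderiv ℝ f w Complex.I) / 2. -/

import Mathlib

open MeasureTheory

/-- The Wirtinger antiholomorphic derivative `∂̄f` of `f : ℂ → ℂ` viewed as ℝ-differentiable. -/
noncomputable def dbar (f : ℂ → ℂ) (w : ℂ) : ℂ :=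
  (fderiv ℝ f w 1 + Complex.I * fderiv ℝ f w Complex.I) / 2

open Set Complex

/-- Integrability criterion on the polar target for continuous functions vanishing for large
radius. -/
lemma aux_integrableOn_target {F : ℝ × ℝ → ℂ} (hF : Continuous F) {R : ℝ}
    (h0 : ∀ p : ℝ × ℝ, R < p.1 → F p = 0) :
    IntegrableOn F (Set.Ioi (0:ℝ) ×ˢ Set.Ioo (-Real.pi) Real.pi) := by
  have hK : IntegrableOn F (Set.Icc (0:ℝ) R ×ˢ Set.Icc (-Real.pi) Real.pi) :=
    hF.continuousOn.integrableOn_compact (isCompact_Icc.prod isCompact_Icc)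
  have hmeas : MeasurableSet (Prod.fst ⁻¹' Set.Ioi R : Set (ℝ × ℝ)) :=
    measurable_fst measurableSet_Ioi
  have hB : IntegrableOn F (Prod.fst ⁻¹' Set.Ioi R : Set (ℝ × ℝ)) := by
    exact (integrableOn_congr_fun (g := fun _ => 0) (fun x hx => h0 x hx) hmeas).mpr
      integrableOn_zero
  refine (hK.union hB).mono_set ?_
  rintro ⟨r, θ⟩ ⟨hr, hθ⟩
  rcases le_or_gt r R with h | h
  · exact Or.inl ⟨⟨le_of_lt hr, h⟩, ⟨hθ.1.le, hθ.2.le⟩⟩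
  · exact Or.inr h

/-- Polar change of variables for integrability, real version. -/
lemma integrable_iff_polar (g : ℝ × ℝ → ℂ) :
    Integrable g ↔
      IntegrableOn (fun p => p.1 • g (polarCoord.symm p)) polarCoord.target := by
  set B : ℝ × ℝ → ℝ × ℝ →L[ℝ] ℝ × ℝ := fun p =>
    LinearMap.toContinuousLinearMap (Matrix.toLin (Module.Basis.finTwoProd ℝ) (Module.Basis.finTwoProd ℝ)
      !![Real.cos p.2, -p.1 * Real.sin p.2; Real.sin p.2, p.1 * Real.cos p.2]) with hB
  have A : ∀ p ∈ polarCoord.target, HasFDerivWithinAt polarCoord.symm (B p) polarCoord.target p :=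
    fun p _ => (hasFDerivAt_polarCoord_symm p).hasFDerivWithinAt
  have B_det : ∀ p, (B p).det = p.1 := by
    intro p
    conv_rhs => rw [← one_mul p.1, ← Real.cos_sq_add_sin_sq p.2]
    simp only [hB, neg_mul, LinearMap.det_toContinuousLinearMap, LinearMap.det_toLin,
      Matrix.det_fin_two_of, sub_neg_eq_add]
    ring
  have hinj : Set.InjOn polarCoord.symm polarCoord.target := by
    have := polarCoord.symm.injOn
    rwa [OpenPartialHomeomorph.symm_source] at this
  have himg : polarCoord.symm '' polarCoord.target = polarCoord.source :=
    polarCoord.symm_image_target_eq_source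
  have h1 : Integrable g ↔ IntegrableOn g polarCoord.source := by
    unfold IntegrableOn
    rw [Measure.restrict_congr_set polarCoord_source_ae_eq_univ, Measure.restrict_univ]
  rw [h1, ← himg,
    integrableOn_image_iff_integrableOn_abs_det_fderiv_smul volume
      polarCoord.open_target.measurableSet A hinj g]
  refine integrableOn_congr_fun (fun p hp => ?_) polarCoord.open_target.measurableSet
  rw [B_det, abs_of_pos hp.1]

/-- Polar change of variables for integrability, complex version. -/
lemma complex_integrable_iff_polar (g : ℂ → ℂ) :
    Integrable g ↔
      IntegrableOn (fun p => p.1 • g (Complex.polarCoord.symm p)) polarCoord.target := by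
  rw [← (Complex.volume_preserving_equiv_real_prod.symm).integrable_comp_emb
    Complex.measurableEquivRealProd.symm.measurableEmbedding, integrable_iff_polar]
  rfl

/-- A continuous compactly supported function divided by `u` is integrable on `ℂ`. -/
lemma integrable_div_self {h : ℂ → ℂ} (hc : Continuous h) (hs : HasCompactSupport h) :
    Integrable (fun u : ℂ => h u / u) := by
  obtain ⟨R, hR⟩ := hs.isBounded.subset_closedBall 0
  obtain ⟨C, hC⟩ := hs.exists_bound_of_continuous hc
  rw [complex_integrable_iff_polar]
  have hT : polarCoord.target = Set.Ioi (0:ℝ) ×ˢ Set.Ioo (-Real.pi) Real.pi := rfl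
  rw [hT]
  set R' := max R 0 with hR'
  set C' := max C 0 with hC'
  simp only [Complex.polarCoord_symm_apply]
  set e : ℝ × ℝ → ℂ := fun p => ↑p.1 * (Real.cos p.2 + Real.sin p.2 * Complex.I) with he
  set Φ : ℝ × ℝ → ℂ := fun p => p.1 • (h (e p) / e p) with hΦ
  have habs : ∀ p : ℝ × ℝ, ‖e p‖ = |p.1| := by
    intro p
    have := Complex.norm_exp_ofReal_mul_I p.2
    rw [Complex.exp_mul_I, ← Complex.ofReal_cos, ← Complex.ofReal_sin] at this
    simp only [he, norm_mul, Complex.norm_real, Real.norm_eq_abs, this, mul_one]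
  have hmeasT : MeasurableSet (Set.Ioi (0:ℝ) ×ˢ Set.Ioo (-Real.pi) Real.pi) :=
    (measurableSet_Ioi.prod measurableSet_Ioo)
  have hΦmeas : AEStronglyMeasurable Φ
      (volume.restrict (Set.Ioi (0:ℝ) ×ˢ Set.Ioo (-Real.pi) Real.pi)) := by
    apply Measurable.aestronglyMeasurable
    rw [hΦ, he]
    fun_prop
  set G : ℝ × ℝ → ℝ := (Set.Ioc (0:ℝ) R' ×ˢ Set.Ioo (-Real.pi) Real.pi).indicator
    (fun _ => C') with hG
  have hGint : Integrable G (volume.restrict (Set.Ioi (0:ℝ) ×ˢ Set.Ioo (-Real.pi) Real.pi)) := by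
    apply Integrable.restrict
    rw [hG, integrable_indicator_iff (measurableSet_Ioc.prod measurableSet_Ioo)]
    refine (integrableOn_const_iff enorm_ne_top).mpr (Or.inr ?_)
    rw [Measure.volume_eq_prod, Measure.prod_prod, Real.volume_Ioc, Real.volume_Ioo]
    exact ENNReal.mul_lt_top ENNReal.ofReal_lt_top ENNReal.ofReal_lt_top
  refine Integrable.mono' hGint hΦmeas ?_
  refine (ae_restrict_iff' hmeasT).mpr (ae_of_all _ ?_)
  rintro ⟨r, θ⟩ ⟨hr, hθ⟩
  simp only [Set.mem_Ioi] at hr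
  rcases le_or_gt r R' with hcase | hcase
  · have hmem : (r, θ) ∈ Set.Ioc (0:ℝ) R' ×ˢ Set.Ioo (-Real.pi) Real.pi := ⟨⟨hr, hcase⟩, hθ⟩
    rw [hG, Set.indicator_of_mem hmem]
    have her : ‖e (r, θ)‖ = r := by rw [habs]; exact abs_of_pos hr
    have hene : e (r, θ) ≠ 0 := by
      intro h'
      rw [h', norm_zero] at her
      exact hr.ne her
    rw [norm_smul, norm_div]
    rw [Real.norm_eq_abs, abs_of_pos hr]
    rw [her]
    rw [mul_div_assoc'] -- r * ‖h‖ / r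
    rw [mul_comm, mul_div_assoc, div_self hr.ne', mul_one]
    exact le_trans (hC _) (le_max_left _ _)
  · have hout : e (r, θ) ∉ tsupport h := by
      intro hmem
      have h1 := hR hmem
      rw [Metric.mem_closedBall, dist_zero_right, habs,
        abs_of_pos hr] at h1
      exact absurd h1 (not_le.mpr (lt_of_le_of_lt (le_max_left R 0) hcase))
    have hz : h (e (r, θ)) = 0 := image_eq_zero_of_notMem_tsupport hout
    have : Φ (r, θ) = 0 := by rw [hΦ]; simp [hz]
    rw [this, norm_zero]
    exact Set.indicator_nonneg (fun _ _ => le_max_right _ _) _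

lemma hexp (θ : ℝ) : ((Real.cos θ : ℂ) + (Real.sin θ : ℂ) * Complex.I) = Complex.exp (θ * Complex.I) := by
  rw [Complex.exp_mul_I, Complex.ofReal_cos, Complex.ofReal_sin]

lemma polar_integrand_eq (g : ℂ → ℂ) {r θ : ℝ} (hr : 0 < r) :
    r • (dbar g ((r:ℂ) * Complex.exp (θ * Complex.I)) / ((r:ℂ) * Complex.exp (θ * Complex.I)))
      = (fderiv ℝ g ((r:ℂ) * Complex.exp (θ * Complex.I)) (Complex.exp (θ * Complex.I))
          + Complex.I * fderiv ℝ g ((r:ℂ) * Complex.exp (θ * Complex.I))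
              (Complex.I * Complex.exp (θ * Complex.I))) / 2 := by
  set D := fderiv ℝ g ((r:ℂ) * Complex.exp (θ * Complex.I)) with hD
  set a := Real.cos θ with ha
  set b := Real.sin θ with hb
  have hab : (a:ℂ)^2 + (b:ℂ)^2 = 1 := by
    have := Real.cos_sq_add_sin_sq θ
    rw [← ha, ← hb] at this
    exact_mod_cast congrArg (Complex.ofReal) this
  have he : Complex.exp (θ * Complex.I) = (a:ℂ) + (b:ℂ) * Complex.I := (hexp θ).symm
  have h1 : D (Complex.exp (θ * Complex.I)) = (a:ℂ) * D 1 + (b:ℂ) * D Complex.I := by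
    rw [he]
    have : (a:ℂ) + (b:ℂ) * Complex.I = a • (1:ℂ) + b • Complex.I := by
      simp [Complex.real_smul]
    rw [this, map_add, D.map_smul, D.map_smul, Complex.real_smul, Complex.real_smul]
  have h2 : D (Complex.I * Complex.exp (θ * Complex.I))
      = -(b:ℂ) * D 1 + (a:ℂ) * D Complex.I := by
    rw [he]
    have : Complex.I * ((a:ℂ) + (b:ℂ) * Complex.I) = (-b : ℝ) • (1:ℂ) + a • Complex.I := by
      simp [Complex.real_smul]
      linear_combination (b:ℂ) * Complex.I_sq
    rw [this, map_add, D.map_smul, D.map_smul, Complex.real_smul, Complex.real_smul]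
    push_cast
    ring
  have hexpne : Complex.exp (θ * Complex.I) ≠ 0 := Complex.exp_ne_zero _
  have hrne : (r:ℂ) ≠ 0 := by exact_mod_cast hr.ne'
  have hune : (a:ℂ) + (b:ℂ) * Complex.I ≠ 0 := by
    rw [← he]; exact hexpne
  rw [dbar, h1, h2, ← hD, Complex.real_smul, he]
  have key : D 1 + Complex.I * D Complex.I
      = ((a:ℂ) * D 1 + (b:ℂ) * D Complex.I
          + Complex.I * (-(b:ℂ) * D 1 + (a:ℂ) * D Complex.I)) * ((a:ℂ) + (b:ℂ) * Complex.I) := by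
    linear_combination (-(D 1) - Complex.I * D Complex.I) * hab
      + ((b:ℂ)^2 * D 1 - (a:ℂ)*(b:ℂ)* D Complex.I) * Complex.I_sq
  rw [key]
  field_simp


lemma aux_integrableOn_Ioi {φ : ℝ → ℂ} (hφ : Continuous φ) {R : ℝ}
    (h0 : ∀ r, R < r → φ r = 0) : IntegrableOn φ (Set.Ioi (0:ℝ)) := by
  have hK : IntegrableOn φ (Set.Icc (0:ℝ) R) :=
    hφ.continuousOn.integrableOn_compact isCompact_Icc
  have hB : IntegrableOn φ (Set.Ioi R) := by
    exact (integrableOn_congr_fun (g := fun _ => 0) (fun x hx => h0 x hx)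
      measurableSet_Ioi).mpr integrableOn_zero
  refine (hK.union hB).mono_set ?_
  intro r hr
  rcases le_or_gt r R with h | h
  · exact Or.inl ⟨le_of_lt hr, h⟩
  · exact Or.inr h

lemma my_setIntegral_prod_symm (f : ℝ × ℝ → ℂ) {s t : Set ℝ}
    (hf : IntegrableOn f (s ×ˢ t)) :
    ∫ z in s ×ˢ t, f z = ∫ y in t, ∫ x in s, f (x, y) := by
  unfold IntegrableOn at hf
  rw [Measure.volume_eq_prod, ← Measure.prod_restrict] at hf ⊢
  exact MeasureTheory.integral_prod_symm f hf

lemma my_setIntegral_prod (f : ℝ × ℝ → ℂ) {s t : Set ℝ}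
    (hf : IntegrableOn f (s ×ˢ t)) :
    ∫ z in s ×ˢ t, f z = ∫ x in s, ∫ y in t, f (x, y) := by
  unfold IntegrableOn at hf
  rw [Measure.volume_eq_prod, ← Measure.prod_restrict] at hf ⊢
  exact MeasureTheory.integral_prod f hf

lemma key0 {g : ℂ → ℂ} (hg : ContDiff ℝ 1 g) (hs : HasCompactSupport g) :
    (∫ u : ℂ, dbar g u / u) = -(Real.pi : ℂ) * g 0 := by
  obtain ⟨R, hRsub⟩ := hs.isBounded.subset_closedBall 0
  have hgd : Differentiable ℝ g := hg.differentiable one_ne_zero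
  have hfc : Continuous (fderiv ℝ g) := hg.continuous_fderiv one_ne_zero
  set c : ℝ → ℂ := fun θ => Complex.exp (θ * Complex.I) with hc
  have hccont : Continuous c := by rw [hc]; fun_prop
  set Fr : ℝ × ℝ → ℂ := fun p => fderiv ℝ g ((p.1:ℂ) * c p.2) (c p.2) with hFr
  set Fθ : ℝ × ℝ → ℂ := fun p => fderiv ℝ g ((p.1:ℂ) * c p.2) (Complex.I * c p.2) with hFθ
  set T : Set (ℝ × ℝ) := Set.Ioi (0:ℝ) ×ˢ Set.Ioo (-Real.pi) Real.pi with hT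
  have hmul : Continuous (fun p : ℝ × ℝ => (p.1:ℂ) * c p.2) := by fun_prop
  have habs : ∀ p : ℝ × ℝ, ‖(p.1:ℂ) * c p.2‖ = |p.1| := by
    intro p
    rw [norm_mul, hc, Complex.norm_exp_ofReal_mul_I, mul_one, Complex.norm_real, Real.norm_eq_abs]
  have hvanish : ∀ p : ℝ × ℝ, R < p.1 → fderiv ℝ g ((p.1:ℂ) * c p.2) = 0 := by
    intro p hp
    have hnm : ((p.1:ℂ) * c p.2) ∉ tsupport g := by
      intro hmem
      have h1 := hRsub hmem
      rw [Metric.mem_closedBall, dist_zero_right, habs] at h1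
      have := le_abs_self p.1
      linarith
    by_contra hne
    exact hnm (support_fderiv_subset ℝ (Function.mem_support.mpr hne))
  have hFrcont : Continuous Fr := (hfc.comp hmul).clm_apply (hccont.comp continuous_snd)
  have hFθcont : Continuous Fθ :=
    (hfc.comp hmul).clm_apply (continuous_const.mul (hccont.comp continuous_snd))
  have hFrint : IntegrableOn Fr T :=
    aux_integrableOn_target hFrcont (R := R) (fun p hp => by
      rw [hFr]; simp only []; rw [hvanish p hp]; simp)
  have hFθint : IntegrableOn Fθ T :=
    aux_integrableOn_target hFθcont (R := R) (fun p hp => by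
      rw [hFθ]; simp only []; rw [hvanish p hp]; simp)
  -- step 1: polar coordinates
  have step1 : (∫ u : ℂ, dbar g u / u)
      = ∫ p in T, p.1 • (dbar g (Complex.polarCoord.symm p) / Complex.polarCoord.symm p) :=
    (Complex.integral_comp_polarCoord_symm (fun u => dbar g u / u)).symm
  -- step 2: pointwise identity
  have step2 : ∫ p in T, p.1 • (dbar g (Complex.polarCoord.symm p) / Complex.polarCoord.symm p)
      = ∫ p in T, (Fr p + Complex.I * Fθ p) / 2 := by
    refine setIntegral_congr_fun (measurableSet_Ioi.prod measurableSet_Ioo) ?_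
    rintro ⟨r, θ⟩ ⟨hr, hθ⟩
    simp only [Complex.polarCoord_symm_apply, hexp θ]
    exact polar_integrand_eq g hr
  -- step 3: split
  have step3 : ∫ p in T, (Fr p + Complex.I * Fθ p) / 2
      = (2:ℂ)⁻¹ * ((∫ p in T, Fr p) + Complex.I * ∫ p in T, Fθ p) := by
    have hpt : ∀ p : ℝ × ℝ, (Fr p + Complex.I * Fθ p) / 2
        = (2:ℂ)⁻¹ * Fr p + ((2:ℂ)⁻¹ * Complex.I) * Fθ p := fun p => by ring
    simp_rw [hpt]
    rw [integral_add (hFrint.const_mul _) (hFθint.const_mul _), integral_const_mul,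
      integral_const_mul]
    ring
  -- radial integral
  have hrad : ∀ θ : ℝ, (∫ r in Set.Ioi (0:ℝ), Fr (r, θ)) = -(g 0) := by
    intro θ
    have hφd : ∀ r : ℝ, HasDerivAt (fun r : ℝ => g ((r:ℂ) * c θ)) (Fr (r, θ)) r := by
      intro r
      have h1 : HasDerivAt (fun r : ℝ => (r:ℂ) * c θ) (c θ) r := by
        simpa using (Complex.ofRealCLM.hasDerivAt (x := r)).mul_const (c θ)
      exact (hgd ((r:ℂ) * c θ)).hasFDerivAt.comp_hasDerivAt r h1
    have hcont1 : Continuous (fun r : ℝ => Fr (r, θ)) :=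
      hFrcont.comp (continuous_id.prodMk continuous_const)
    have hint1 : IntegrableOn (fun r : ℝ => Fr (r, θ)) (Set.Ioi 0) :=
      aux_integrableOn_Ioi hcont1 (R := R) (fun r hr => by
        show Fr (r, θ) = 0
        rw [hFr]; simp only []; rw [hvanish (r, θ) hr]; simp)
    have htend : Filter.Tendsto (fun r : ℝ => g ((r:ℂ) * c θ)) Filter.atTop (nhds 0) := by
      have hev : (fun r : ℝ => g ((r:ℂ) * c θ)) =ᶠ[Filter.atTop] (fun _ => 0) := by
        filter_upwards [Filter.eventually_gt_atTop R] with r hr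
        have hnm : ((r:ℂ) * c θ) ∉ tsupport g := by
          intro hmem
          have h1 := hRsub hmem
          rw [Metric.mem_closedBall, dist_zero_right,
            habs (r, θ)] at h1
          have := le_abs_self r
          linarith
        exact image_eq_zero_of_notMem_tsupport hnm
      exact Filter.Tendsto.congr' hev.symm tendsto_const_nhds
    have := integral_Ioi_of_hasDerivAt_of_tendsto
      ((hgd.continuous.comp (by fun_prop : Continuous (fun r : ℝ => (r:ℂ) * c θ))).continuousWithinAt)
      (fun x _ => hφd x) hint1 htend
    simpa using this
  -- angular integral
  have hang : ∀ r : ℝ, r ∈ Set.Ioi (0:ℝ) → (∫ θ in Set.Ioo (-Real.pi) Real.pi, Fθ (r, θ)) = 0 := by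
    intro r hr
    rw [Set.mem_Ioi] at hr
    have hψd : ∀ θ : ℝ, HasDerivAt (fun θ : ℝ => (r⁻¹ : ℝ) • g ((r:ℂ) * c θ)) (Fθ (r, θ)) θ := by
      intro θ
      have h1 : HasDerivAt (fun θ : ℝ => (θ:ℂ) * Complex.I) Complex.I θ := by
        simpa using (Complex.ofRealCLM.hasDerivAt (x := θ)).mul_const Complex.I
      have h2 := h1.cexp
      have h3 := h2.const_mul ((r:ℂ))
      have h4 := (hgd ((r:ℂ) * c θ)).hasFDerivAt.comp_hasDerivAt θ h3
      have h5 := h4.const_smul (r⁻¹ : ℝ)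
      refine HasDerivAt.congr_deriv h5 ?_
      have harg : ((r:ℂ) * (Complex.exp ((θ:ℂ) * Complex.I) * Complex.I))
          = (r : ℝ) • (Complex.I * c θ) := by
        rw [Complex.real_smul, hc]; ring
      rw [harg, ContinuousLinearMap.map_smul, smul_smul, inv_mul_cancel₀ hr.ne', one_smul]
    have hcont2 : Continuous (fun θ : ℝ => Fθ (r, θ)) :=
      hFθcont.comp (continuous_const.prodMk continuous_id)
    have hIoo : (∫ θ in Set.Ioo (-Real.pi) Real.pi, Fθ (r, θ))
        = ∫ θ in (-Real.pi)..Real.pi, Fθ (r, θ) := by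
      rw [intervalIntegral.integral_of_le (by linarith [Real.pi_pos]),
        integral_Ioc_eq_integral_Ioo]
    rw [hIoo, intervalIntegral.integral_eq_sub_of_hasDerivAt (fun θ _ => hψd θ)
      (hcont2.intervalIntegrable _ _)]
    have hcpi : c Real.pi = -1 := by rw [hc]; exact Complex.exp_pi_mul_I
    have hcnpi : c (-Real.pi) = -1 := by
      rw [hc]
      push_cast
      rw [neg_mul, Complex.exp_neg, Complex.exp_pi_mul_I]
      norm_num
    rw [hcpi, hcnpi, sub_self]
  -- assemble
  have hFrval : (∫ p in T, Fr p) = -((2 * Real.pi : ℝ) • g 0) := by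
    rw [hT, my_setIntegral_prod_symm Fr hFrint]
    have : ∀ θ : ℝ, θ ∈ Set.Ioo (-Real.pi) Real.pi →
        (∫ r in Set.Ioi (0:ℝ), Fr (r, θ)) = -(g 0) := fun θ _ => hrad θ
    rw [setIntegral_congr_fun measurableSet_Ioo this, setIntegral_const]
    rw [measureReal_def, Real.volume_Ioo]
    rw [ENNReal.toReal_ofReal (by linarith [Real.pi_pos])]
    rw [smul_neg]
    congr 2
    ring
  have hFθval : (∫ p in T, Fθ p) = 0 := by
    rw [hT, my_setIntegral_prod Fθ hFθint]
    rw [setIntegral_congr_fun measurableSet_Ioi hang]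
    simp
  rw [step1, step2, step3, hFrval, hFθval]
  rw [Complex.real_smul]
  push_cast
  ring

lemma keyx {f : ℂ → ℂ} (hf : ContDiff ℝ 1 f) (hs : HasCompactSupport f) (x : ℂ) :
    (∫ w : ℂ, dbar f w / (w - x)) = -(Real.pi : ℂ) * f x := by
  set g : ℂ → ℂ := fun u => f (u + x) with hg
  have hgc : ContDiff ℝ 1 g := hf.comp (contDiff_id.add contDiff_const)
  have hgs : HasCompactSupport g := hs.comp_homeomorph (Homeomorph.addRight x)
  have hdbar : ∀ u : ℂ, dbar g u = dbar f (u + x) := by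
    intro u
    have hfd : fderiv ℝ g u = fderiv ℝ f (u + x) := by
      have h2 : HasFDerivAt (fun u : ℂ => u + x) (ContinuousLinearMap.id ℝ ℂ) u :=
        (hasFDerivAt_id u).add_const x
      have h1 : HasFDerivAt g (fderiv ℝ f (u + x)) u := by
        have := ((hf.differentiable one_ne_zero (u + x)).hasFDerivAt).comp u h2
        simp only [ContinuousLinearMap.comp_id] at this
        exact this
      exact h1.fderiv
    rw [dbar, dbar, hfd]
  have h0 : (∫ u : ℂ, dbar g u / u) = -(Real.pi : ℂ) * g 0 := key0 hgc hgs
  simp only [hdbar] at h0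
  have htrans : (∫ w : ℂ, dbar f w / (w - x)) = ∫ u : ℂ, dbar f (u + x) / (u + x - x) :=
    (integral_add_right_eq_self (fun w => dbar f w / (w - x)) x).symm
  rw [htrans]
  simp only [add_sub_cancel_right]
  rw [h0, hg]
  simp

lemma integrable_div_sub {h : ℂ → ℂ} (hc : Continuous h) (hs : HasCompactSupport h) (x : ℂ) :
    Integrable (fun w : ℂ => h w / (w - x)) := by
  have h1 : Integrable (fun u : ℂ => h (u + x) / u) :=
    integrable_div_self (hc.comp (continuous_id.add continuous_const))
      (hs.comp_homeomorph (Homeomorph.addRight x))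
  have h2 := h1.comp_add_right (-x)
  simpa [sub_eq_add_neg] using h2

/-- Scalar form of Lemma 2.3: the integral of a rational 1-form with simple poles against
the `∂̄`-differential of a compactly supported function localises to the residues. -/
theorem cauchy_pompeiu_simple_poles (z : Finset ℂ) (k : ℂ → ℂ) (f : ℂ → ℂ)
    (hf : ContDiff ℝ 1 f) (hsupp : HasCompactSupport f) :
    ∫ w : ℂ, (∑ x ∈ z, k x / (w - x)) * dbar f w ∂volume
      = -(Real.pi : ℂ) * ∑ x ∈ z, k x * f x := by
  have hfc : Continuous (fderiv ℝ f) := hf.continuous_fderiv one_ne_zero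
  have hdbarc : Continuous (dbar f) :=
    ((hfc.clm_apply continuous_const).add
      (continuous_const.mul (hfc.clm_apply continuous_const))).div_const 2
  have hdbars : HasCompactSupport (dbar f) := by
    have := (hsupp.fderiv (𝕜 := ℝ)).comp_left
      (g := fun L : ℂ →L[ℝ] ℂ => (L 1 + Complex.I * L Complex.I) / 2) (by simp)
    exact this
  have hint : ∀ x : ℂ, Integrable (fun w : ℂ => k x / (w - x) * dbar f w) := by
    intro x
    have heq : (fun w : ℂ => k x / (w - x) * dbar f w)
        = fun w : ℂ => k x * (dbar f w / (w - x)) := funext fun w => by ring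
    rw [heq]
    exact (integrable_div_sub hdbarc hdbars x).const_mul _
  simp_rw [Finset.sum_mul]
  rw [integral_finset_sum z (fun x _ => hint x)]
  have hterm : ∀ x : ℂ, (∫ w : ℂ, k x / (w - x) * dbar f w) = k x * (-(Real.pi : ℂ) * f x) := by
    intro x
    have heq : (fun w : ℂ => k x / (w - x) * dbar f w)
        = fun w : ℂ => k x * (dbar f w / (w - x)) := funext fun w => by ring
    rw [heq, integral_const_mul, keyx hf hsupp x]
  rw [Finset.sum_congr rfl (fun x _ => hterm x), Finset.mul_sum]
  exact Finset.sum_congr rfl (fun x _ => by ring)
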